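/- For every real x with |x| ≤ 1, the series ∑_{ℓ=0}^∞ (binom(2ℓ, ℓ) · 2^{−2ℓ} / (2ℓ+1)) · x^{2ℓ+1} converges to arcsin(x). In particular, taking x = 1, the sum of the (nonnegative) Taylor coefficients of arcsin equals π/2, i.e. ∑_{ℓ=0}^∞ binom(2ℓ, ℓ) · 2^{−2ℓ} / (2ℓ+1) = π/2. -/

import Mathlib

open Real

namespace ArcsinTaylorAux

noncomputable def c (l : ℕ) : ℝ := (Nat.choose (2 * l) l : ℝ) * ((2 : ℝ) ^ (2 * l))⁻¹

noncomputable def a (l : ℕ) : ℝ := c l / (2 * l + 1)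

lemma c_pos (l : ℕ) : 0 < c l := by
  apply mul_pos
  · exact_mod_cast Nat.cast_pos.2 (Nat.choose_pos (by omega))
  · positivity

lemma c_zero : c 0 = 1 := by simp [c]

lemma c_rec (l : ℕ) : c (l + 1) * (2 * l + 2) = c l * (2 * l + 1) := by
  have h := Nat.succ_mul_centralBinom_succ l
  have h' : ((l : ℝ) + 1) * (Nat.choose (2 * (l + 1)) (l + 1) : ℝ)
      = 2 * (2 * l + 1) * (Nat.choose (2 * l) l : ℝ) := by
    have := congrArg (fun n : ℕ => (n : ℝ)) h
    simpa [Nat.centralBinom, Nat.succ_eq_add_one] using this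
  have hp : ((2 : ℝ) ^ (2 * (l + 1))) = ((2 : ℝ) ^ (2 * l)) * 4 := by
    have : 2 * (l + 1) = 2 * l + 1 + 1 := by ring
    rw [this, pow_succ, pow_succ]; ring
  have hpow : (0:ℝ) < (2 : ℝ) ^ (2 * l) := by positivity
  unfold c
  rw [hp, mul_inv]
  field_simp
  nlinarith [h', hpow]

lemma c_succ (l : ℕ) : c (l + 1) = c l * (2 * l + 1) / (2 * l + 2) := by
  have h := c_rec l
  have h2 : (2 * (l : ℝ) + 2) ≠ 0 := by positivity
  field_simp
  linarith [h]

lemma c_le_one (l : ℕ) : c l ≤ 1 := by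
  induction l with
  | zero => simp [c_zero]
  | succ n ih =>
      rw [c_succ]
      have hn : (0:ℝ) < 2 * n + 2 := by positivity
      rw [div_le_one hn]
      nlinarith [c_pos n]

lemma a_nonneg (l : ℕ) : 0 ≤ a l := by
  have := c_pos l
  have h1 : (0:ℝ) < 2 * l + 1 := by positivity
  exact le_of_lt (div_pos this h1)

lemma summable_a : Summable a := by
  apply summable_of_sum_range_le (c := 2) a_nonneg
  intro n
  have key : ∀ l : ℕ, a l ≤ 2 * c l - 2 * c (l + 1) := by
    intro l
    rw [c_succ]
    have hn : (0:ℝ) < 2 * l + 2 := by positivity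
    have hc := c_pos l
    have h1 : (0:ℝ) < 2 * l + 1 := by positivity
    rw [a, div_le_iff₀ h1, mul_div_assoc]
    rw [show 2 * c l - 2 * (c l * ((2 * (l:ℝ) + 1) / (2 * l + 2)))
        = c l * (2 * ((2 * (l:ℝ) + 2) - (2 * l + 1)) / (2 * l + 2)) by field_simp]
    rw [mul_assoc, le_mul_iff_one_le_right hc, div_mul_eq_mul_div, le_div_iff₀ hn]
    ring_nf
    linarith
  calc ∑ l ∈ Finset.range n, a l
      ≤ ∑ l ∈ Finset.range n, (2 * c l - 2 * c (l + 1)) :=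
        Finset.sum_le_sum fun l _ => key l
    _ = 2 * c 0 - 2 * c n := by
        rw [Finset.sum_range_sub' (fun l => 2 * c l)]
    _ ≤ 2 := by
        have := c_pos n
        simp only [c_zero]
        linarith

end ArcsinTaylorAux

namespace ArcsinTaylorAux2
open ArcsinTaylorAux

lemma summable_linear_geo {s : ℝ} (hs : |s| < 1) :
    Summable (fun l : ℕ => (2 * l + 3 : ℝ) * s ^ l) := by
  have h1 : Summable (fun n : ℕ => (n : ℝ) ^ 1 * s ^ n) :=
    summable_pow_mul_geometric_of_norm_lt_one 1 (by simpa using hs)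
  have h2 : Summable (fun n : ℕ => s ^ n) :=
    summable_geometric_of_norm_lt_one (by simpa using hs)
  have h := (h1.mul_left 2).add (h2.mul_left 3)
  refine h.congr fun l => ?_
  push_cast
  ring

lemma summable_master {y : ℝ} (hy : |y| < 1) {b : ℕ → ℝ} {e : ℕ → ℕ}
    (hb : ∀ l, |b l| ≤ 2 * l + 3) (he : ∀ l, l ≤ e l) :
    Summable (fun l => b l * y ^ e l) := by
  apply Summable.of_norm_bounded (summable_linear_geo (s := |y|) (by rwa [abs_abs]))
  intro l
  rw [norm_mul, norm_pow, Real.norm_eq_abs, Real.norm_eq_abs]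
  have h1 : |y| ^ e l ≤ |y| ^ l := pow_le_pow_of_le_one (abs_nonneg y) hy.le (he l)
  have h2 : (0:ℝ) ≤ 2 * l + 3 := by positivity
  exact mul_le_mul (hb l) h1 (pow_nonneg (abs_nonneg y) _) h2

lemma abs_c_le (l : ℕ) : |c l| ≤ 2 * l + 3 := by
  rw [abs_of_pos (c_pos l)]
  have := c_le_one l
  have : (0:ℝ) ≤ (l:ℝ) := Nat.cast_nonneg l
  linarith [c_le_one l]

noncomputable def g (y : ℝ) : ℝ := ∑' l, c l * y ^ (2 * l)

end ArcsinTaylorAux2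

namespace ArcsinTaylorAux2
open ArcsinTaylorAux
lemma abs_mul_le (l : ℕ) {t : ℝ} (ht : 0 ≤ t) (ht' : t ≤ 2 * l + 3) : |c l * t| ≤ 2 * l + 3 := by
  rw [abs_mul, abs_of_pos (c_pos l), abs_of_nonneg ht]
  calc c l * t ≤ 1 * t := by
        apply mul_le_mul_of_nonneg_right (c_le_one l) ht
    _ ≤ 2 * l + 3 := by simpa using ht'

lemma sum_D {y : ℝ} (hy : |y| < 1) :
    Summable (fun l : ℕ => c l * (((2 * l : ℕ) : ℝ) * y ^ (2 * l - 1))) := by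
  refine (summable_master hy (b := fun l => c l * ((2 * l : ℕ) : ℝ)) (e := fun l => 2 * l - 1)
    (fun l => ?_) (fun l => by omega)).congr fun l => by ring
  exact abs_mul_le l (by positivity) (by push_cast; linarith)

lemma sum_S1 {y : ℝ} (hy : |y| < 1) :
    Summable (fun l : ℕ => c l * (2 * l + 1) * y ^ (2 * l + 1)) := by
  refine summable_master hy (b := fun l => c l * (2 * l + 1)) (e := fun l => 2 * l + 1)
    (fun l => ?_) (fun l => by omega)
  exact abs_mul_le l (by positivity) (by push_cast; linarith)

lemma sum_S2 {y : ℝ} (hy : |y| < 1) :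
    Summable (fun l : ℕ => c l * y ^ (2 * l + 1)) := by
  refine summable_master hy (b := fun l => c l) (e := fun l => 2 * l + 1)
    (fun l => ?_) (fun l => by omega)
  exact (abs_of_pos (c_pos l)).le.trans (by nlinarith [c_le_one l, Nat.cast_nonneg (α := ℝ) l])

lemma sum_g {y : ℝ} (hy : |y| < 1) :
    Summable (fun l : ℕ => c l * y ^ (2 * l)) := by
  refine summable_master hy (b := fun l => c l) (e := fun l => 2 * l)
    (fun l => ?_) (fun l => by omega)
  exact (abs_of_pos (c_pos l)).le.trans (by nlinarith [c_le_one l, Nat.cast_nonneg (α := ℝ) l])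

lemma D_eq {y : ℝ} (hy : |y| < 1) :
    (∑' l : ℕ, c l * (((2 * l : ℕ) : ℝ) * y ^ (2 * l - 1)))
      = ∑' l : ℕ, c l * (2 * l + 1) * y ^ (2 * l + 1) := by
  rw [Summable.tsum_eq_zero_add (sum_D hy)]
  have h0 : c 0 * (((2 * 0 : ℕ) : ℝ) * y ^ (2 * 0 - 1)) = 0 := by norm_num
  rw [h0, zero_add]
  apply tsum_congr
  intro l
  have he : 2 * (l + 1) - 1 = 2 * l + 1 := by omega
  rw [he]
  have : ((2 * (l + 1) : ℕ) : ℝ) = 2 * l + 2 := by push_cast; ring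
  rw [this, ← mul_assoc, c_rec l]

lemma ode {y : ℝ} (hy : |y| < 1) :
    (1 - y ^ 2) * (∑' l : ℕ, c l * (((2 * l : ℕ) : ℝ) * y ^ (2 * l - 1))) = y * g y := by
  rw [D_eq hy]
  have hyg : y * g y = ∑' l : ℕ, c l * y ^ (2 * l + 1) := by
    rw [g, ← tsum_mul_left]
    exact tsum_congr fun l => by ring
  have hS3 : y ^ 2 * (∑' l : ℕ, c l * (2 * l + 1) * y ^ (2 * l + 1))
      = ∑' l : ℕ, c (l + 1) * (2 * l + 2) * y ^ (2 * l + 3) := by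
    rw [← tsum_mul_left]
    exact tsum_congr fun l => by rw [c_rec l]; ring
  have hshift2 : Summable (fun l : ℕ => c (l + 1) * y ^ (2 * l + 3)) := by
    refine summable_master hy (b := fun l => c (l + 1)) (e := fun l => 2 * l + 3)
      (fun l => ?_) (fun l => by omega)
    exact (abs_of_pos (c_pos _)).le.trans
      (by nlinarith [c_le_one (l + 1), Nat.cast_nonneg (α := ℝ) l])
  have hshift3 : Summable (fun l : ℕ => c (l + 1) * (2 * l + 2) * y ^ (2 * l + 3)) := by
    refine summable_master hy (b := fun l => c (l + 1) * (2 * l + 2)) (e := fun l => 2 * l + 3)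
      (fun l => ?_) (fun l => by omega)
    have : |c (l + 1) * (2 * (l:ℝ) + 2)| ≤ 2 * ((l:ℕ):ℝ) + 3 := by
      rw [abs_mul, abs_of_pos (c_pos _), abs_of_nonneg (by positivity : (0:ℝ) ≤ 2 * (l:ℝ) + 2)]
      nlinarith [c_le_one (l + 1), c_pos (l + 1), Nat.cast_nonneg (α := ℝ) l]
    simpa using this
  -- main computation
  rw [sub_mul, one_mul, hS3, hyg, sub_eq_iff_eq_add]
  rw [Summable.tsum_eq_zero_add (sum_S1 hy), Summable.tsum_eq_zero_add (sum_S2 hy)]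
  have e1 : ∀ l : ℕ, c (l + 1) * (2 * ((l:ℕ):ℝ) + 1 + 2) * y ^ (2 * (l + 1) + 1)
      = c (l + 1) * (2 * (l:ℝ) + 3) * y ^ (2 * l + 3) := by
    intro l
    have : 2 * (l + 1) + 1 = 2 * l + 3 := by omega
    rw [this]; ring_nf
  have hL : (∑' l : ℕ, c (l + 1) * (2 * ((l + 1 : ℕ):ℝ) + 1) * y ^ (2 * (l + 1) + 1))
      = ∑' l : ℕ, (c (l + 1) * y ^ (2 * l + 3) + c (l + 1) * (2 * (l:ℝ) + 2) * y ^ (2 * l + 3)) := by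
    apply tsum_congr
    intro l
    have h23 : 2 * (l + 1) + 1 = 2 * l + 3 := by omega
    rw [h23]
    push_cast
    ring
  rw [hL, Summable.tsum_add hshift2 hshift3]
  have h0 : c 0 * (2 * ((0:ℕ):ℝ) + 1) * y ^ (2 * 0 + 1) = c 0 * y ^ (2 * 0 + 1) := by
    norm_num
  rw [h0]
  have hR : (∑' b : ℕ, c (b + 1) * y ^ (2 * (b + 1) + 1)) = ∑' b : ℕ, c (b + 1) * y ^ (2 * b + 3) :=
    tsum_congr fun b => by rw [show 2 * (b + 1) + 1 = 2 * b + 3 from by omega]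
  rw [hR]
  ring
end ArcsinTaylorAux2

namespace ArcsinTaylorAux3
open ArcsinTaylorAux ArcsinTaylorAux2 Set

lemma aa_mul (l : ℕ) : a l * (2 * l + 1) = c l := by
  rw [a, div_mul_cancel₀]
  positivity

lemma const_of_deriv {F : ℝ → ℝ} {r y : ℝ} (hy : y ∈ Set.Ioo (-r) r)
    (h0 : (0:ℝ) ∈ Set.Ioo (-r) r) (hF : ∀ z ∈ Set.Ioo (-r) r, HasDerivAt F 0 z) :
    F y = F 0 := by
  rcases le_total 0 y with h | h
  · have hsub : Set.Icc (0:ℝ) y ⊆ Set.Ioo (-r) r := Set.Icc_subset _ h0 hy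
    exact constant_of_has_deriv_right_zero
      (fun z hz => (hF z (hsub hz)).continuousAt.continuousWithinAt)
      (fun z hz => (hF z (hsub (Set.Ico_subset_Icc_self hz))).hasDerivWithinAt)
      y (Set.right_mem_Icc.2 h)
  · have hsub : Set.Icc y (0:ℝ) ⊆ Set.Ioo (-r) r := Set.Icc_subset _ hy h0
    exact (constant_of_has_deriv_right_zero
      (fun z hz => (hF z (hsub hz)).continuousAt.continuousWithinAt)
      (fun z hz => (hF z (hsub (Set.Ico_subset_Icc_self hz))).hasDerivWithinAt)
      0 (Set.right_mem_Icc.2 h)).symm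

lemma r_facts {y : ℝ} (hy : |y| < 1) :
    0 < (|y| + 1) / 2 ∧ (|y| + 1) / 2 < 1 ∧ y ∈ Set.Ioo (-((|y| + 1) / 2)) ((|y| + 1) / 2)
      ∧ (0:ℝ) ∈ Set.Ioo (-((|y| + 1) / 2)) ((|y| + 1) / 2) := by
  have h := abs_nonneg y
  have h2 := abs_lt.mp hy
  have h3 := le_abs_self y
  have h4 := neg_abs_le y
  exact ⟨by linarith, by linarith, ⟨by linarith, by linarith⟩, ⟨by linarith, by linarith⟩⟩

lemma bound_deriv {r : ℝ} (hr0 : 0 < r) (hr1 : r < 1) (l : ℕ) {z : ℝ}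
    (hz : z ∈ Set.Ioo (-r) r) {t : ℝ} (ht : |t| ≤ 2 * l + 3) {e : ℕ} (he : l ≤ e) :
    ‖c l * (t * z ^ e)‖ ≤ (2 * l + 3 : ℝ) * r ^ l := by
  have hzr : |z| ≤ r := by
    rw [abs_le]
    exact ⟨hz.1.le, hz.2.le⟩
  rw [Real.norm_eq_abs, abs_mul, abs_mul, abs_pow, abs_of_pos (c_pos l)]
  have h1 : |z| ^ e ≤ r ^ l :=
    le_trans (pow_le_pow_left₀ (abs_nonneg z) hzr e) (pow_le_pow_of_le_one hr0.le hr1.le he)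
  calc c l * (|t| * |z| ^ e) ≤ 1 * ((2 * l + 3) * r ^ l) := by
        apply mul_le_mul (c_le_one l) _ (by positivity) zero_le_one
        exact mul_le_mul ht h1 (by positivity) (by positivity)
    _ = (2 * l + 3 : ℝ) * r ^ l := by ring

lemma hasDerivAt_g {r y : ℝ} (hr0 : 0 < r) (hr1 : r < 1) (hy : y ∈ Set.Ioo (-r) r) :
    HasDerivAt (fun z : ℝ => ∑' l : ℕ, c l * z ^ (2 * l))
      (∑' l : ℕ, c l * (((2 * l : ℕ) : ℝ) * y ^ (2 * l - 1))) y := by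
  refine hasDerivAt_tsum_of_isPreconnected
    (u := fun l : ℕ => (2 * l + 3 : ℝ) * r ^ l)
    (summable_linear_geo (by rwa [abs_of_pos hr0])) isOpen_Ioo
    (convex_Ioo _ _).isPreconnected
    (fun l z _ => (hasDerivAt_pow (2 * l) z).const_mul (c l))
    (fun l z hz => bound_deriv hr0 hr1 l hz ?_ ?_)
    (⟨by linarith, hr0⟩ : (0:ℝ) ∈ Set.Ioo (-r) r)
    (sum_g (y := 0) (by norm_num)) hy
  · rw [abs_of_nonneg (by positivity : (0:ℝ) ≤ ((2 * l : ℕ) : ℝ))]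
    push_cast
    linarith
  · omega

lemma hasDerivAt_f {r y : ℝ} (hr0 : 0 < r) (hr1 : r < 1) (hy : y ∈ Set.Ioo (-r) r) :
    HasDerivAt (fun z : ℝ => ∑' l : ℕ, a l * z ^ (2 * l + 1))
      (∑' l : ℕ, a l * (((2 * l + 1 : ℕ) : ℝ) * y ^ (2 * l + 1 - 1))) y := by
  refine hasDerivAt_tsum_of_isPreconnected
    (u := fun l : ℕ => (2 * l + 3 : ℝ) * r ^ l)
    (summable_linear_geo (by rwa [abs_of_pos hr0])) isOpen_Ioo
    (convex_Ioo _ _).isPreconnected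
    (fun l z _ => (hasDerivAt_pow (2 * l + 1) z).const_mul (a l))
    (fun l z hz => ?_)
    (⟨by linarith, hr0⟩ : (0:ℝ) ∈ Set.Ioo (-r) r)
    ?_ hy
  · have hrw : a l * (((2 * l + 1 : ℕ) : ℝ) * z ^ (2 * l + 1 - 1))
        = c l * (1 * z ^ (2 * l + 1 - 1)) := by
      rw [one_mul, ← mul_assoc]
      congr 1
      rw [show ((2 * l + 1 : ℕ) : ℝ) = 2 * (l:ℝ) + 1 by push_cast; ring]
      exact aa_mul l
    rw [hrw]
    refine bound_deriv hr0 hr1 l hz ?_ (by omega)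
    rw [abs_one]
    have : (0:ℝ) ≤ (l:ℝ) := Nat.cast_nonneg l
    linarith
  · refine (summable_master (y := (0:ℝ)) (by norm_num) (b := a) (e := fun l => 2 * l + 1)
      (fun l => ?_) (fun l => by omega))
    have h1 := c_pos l
    have h2 := c_le_one l
    have h3 : (0:ℝ) < 2 * (l:ℝ) + 1 := by positivity
    rw [a, abs_of_pos (div_pos h1 h3)]
    have : c l / (2 * (l:ℝ) + 1) ≤ 1 := by
      rw [div_le_one h3]
      nlinarith [Nat.cast_nonneg (α := ℝ) l]
    nlinarith [Nat.cast_nonneg (α := ℝ) l]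

end ArcsinTaylorAux3

namespace ArcsinTaylorAux4
open ArcsinTaylorAux ArcsinTaylorAux2 ArcsinTaylorAux3 Set

lemma g_zero : g 0 = 1 := by
  rw [g, tsum_eq_single 0 (fun b hb => by
    rw [zero_pow (by omega : 2 * b ≠ 0), mul_zero])]
  simp [c_zero]

lemma g_pos {y : ℝ} (hy : |y| < 1) : 1 ≤ g y := by
  have h := Summable.le_tsum (sum_g hy) 0 (fun j _ => by
    have := (c_pos j).le
    rw [pow_mul]
    positivity)
  simpa [c_zero, g] using h

lemma g_eq {y : ℝ} (hy : |y| < 1) : g y = (Real.sqrt (1 - y ^ 2))⁻¹ := by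
  obtain ⟨hr0, hr1, hyr, h0r⟩ := r_facts hy
  set r := (|y| + 1) / 2 with hrdef
  have habs : ∀ z ∈ Set.Ioo (-r) r, |z| < 1 := by
    intro z hz
    rw [abs_lt]
    exact ⟨by linarith [hz.1], by linarith [hz.2]⟩
  have hH : ∀ z ∈ Set.Ioo (-r) r,
      HasDerivAt (fun w : ℝ => (∑' l : ℕ, c l * w ^ (2 * l)) ^ 2 * (1 - w ^ 2)) 0 z := by
    intro z hz
    have hz1 := habs z hz
    have hg := hasDerivAt_g hr0 hr1 hz
    have h1 : HasDerivAt (fun w : ℝ => (∑' l : ℕ, c l * w ^ (2 * l)) ^ 2)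
        ((2:ℕ) * (∑' l : ℕ, c l * z ^ (2 * l)) ^ 1
          * (∑' l : ℕ, c l * (((2 * l : ℕ) : ℝ) * z ^ (2 * l - 1)))) z := hg.pow 2
    have h2 : HasDerivAt (fun w : ℝ => 1 - w ^ 2) (-(((2:ℕ):ℝ) * z ^ (2 - 1))) z :=
      (hasDerivAt_pow 2 z).const_sub 1
    have h3 := h1.mul h2
    have hode := ode hz1
    rw [g] at hode
    refine h3.congr_deriv ?_
    linear_combination (2 * (∑' l : ℕ, c l * z ^ (2 * l))) * hode
  have hconst := const_of_deriv hyr h0r hH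
  have hg0 : (∑' l : ℕ, c l * (0:ℝ) ^ (2 * l)) = 1 := g_zero
  rw [hg0] at hconst
  norm_num at hconst
  -- hconst : (g y)^2 * (1 - y^2) = 1
  have h1 : (0:ℝ) < 1 - y ^ 2 := by
    have := abs_lt.mp hy
    nlinarith
  have hgy := g_pos hy
  have h2 : (g y) ^ 2 = (1 - y ^ 2)⁻¹ := by
    rw [inv_eq_one_div, eq_div_iff h1.ne']
    rw [g]
    linarith [hconst]
  have h3 : g y = Real.sqrt ((1 - y ^ 2)⁻¹) := by
    rw [← h2, Real.sqrt_sq (by linarith)]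
  rw [h3, Real.sqrt_inv]

end ArcsinTaylorAux4

namespace ArcsinTaylorAux5
open ArcsinTaylorAux ArcsinTaylorAux2 ArcsinTaylorAux3 ArcsinTaylorAux4 Set Filter Topology

lemma summable_term {x : ℝ} (hx : |x| ≤ 1) :
    Summable (fun l : ℕ => a l * x ^ (2 * l + 1)) := by
  refine Summable.of_norm_bounded summable_a fun l => ?_
  rw [Real.norm_eq_abs, abs_mul, abs_pow, abs_of_nonneg (a_nonneg l)]
  calc a l * |x| ^ (2 * l + 1) ≤ a l * 1 :=
        mul_le_mul_of_nonneg_left (pow_le_one₀ (abs_nonneg x) hx) (a_nonneg l)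
    _ = a l := mul_one _

lemma tsum_aa {x : ℝ} (hx : |x| < 1) :
    (∑' l : ℕ, a l * x ^ (2 * l + 1)) = Real.arcsin x := by
  obtain ⟨hr0, hr1, hxr, h0r⟩ := r_facts hx
  set r := (|x| + 1) / 2 with hrdef
  have habs : ∀ z ∈ Set.Ioo (-r) r, |z| < 1 := by
    intro z hz
    rw [abs_lt]
    exact ⟨by linarith [hz.1], by linarith [hz.2]⟩
  have hF : ∀ z ∈ Set.Ioo (-r) r,
      HasDerivAt (fun w : ℝ => (∑' l : ℕ, a l * w ^ (2 * l + 1)) - Real.arcsin w) 0 z := by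
    intro z hz
    have hz1 := habs z hz
    have hf := hasDerivAt_f hr0 hr1 hz
    have hderiv_val : (∑' l : ℕ, a l * (((2 * l + 1 : ℕ) : ℝ) * z ^ (2 * l + 1 - 1)))
        = (Real.sqrt (1 - z ^ 2))⁻¹ := by
      rw [← g_eq hz1, g]
      refine tsum_congr fun l => ?_
      rw [show 2 * l + 1 - 1 = 2 * l from by omega,
        show ((2 * l + 1 : ℕ) : ℝ) = 2 * (l : ℝ) + 1 from by push_cast; ring,
        ← mul_assoc, aa_mul]
    have harc := Real.hasDerivAt_arcsin (abs_lt.mp hz1).1.ne' (abs_lt.mp hz1).2.ne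
    have h := hf.sub harc
    rw [hderiv_val] at h
    simp only [one_div, sub_self] at h
    exact h
  have hconst := const_of_deriv hxr h0r hF
  have h0 : (∑' l : ℕ, a l * (0:ℝ) ^ (2 * l + 1)) = 0 := by
    refine (tsum_congr fun l => ?_).trans tsum_zero
    rw [zero_pow (by omega : 2 * l + 1 ≠ 0), mul_zero]
  rw [h0, Real.arcsin_zero] at hconst
  linarith [hconst]

lemma tsum_a_eq_pi : (∑' l : ℕ, a l) = π / 2 := by
  have hmem : Set.Ioo (-1 : ℝ) 1 ∈ 𝓝[<] (1:ℝ) :=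
    Ioo_mem_nhdsLT_of_mem (by constructor <;> norm_num)
  have h1 : Tendsto (fun x : ℝ => ∑' l : ℕ, a l * x ^ (2 * l + 1)) (𝓝[<] (1:ℝ))
      (𝓝 (∑' l : ℕ, a l)) := by
    apply tendsto_tsum_of_dominated_convergence summable_a
    · intro l
      have hcont : Continuous fun x : ℝ => a l * x ^ (2 * l + 1) :=
        continuous_const.mul (continuous_pow _)
      have : Tendsto (fun x : ℝ => a l * x ^ (2 * l + 1)) (𝓝[<] (1:ℝ))
          (𝓝 (a l * 1 ^ (2 * l + 1))) := (hcont.tendsto 1).mono_left nhdsWithin_le_nhds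
      simpa using this
    · filter_upwards [hmem] with x hx l
      have hx1 : |x| ≤ 1 := by
        rw [abs_le]
        exact ⟨hx.1.le, hx.2.le⟩
      rw [Real.norm_eq_abs, abs_mul, abs_pow, abs_of_nonneg (a_nonneg l)]
      calc a l * |x| ^ (2 * l + 1) ≤ a l * 1 :=
            mul_le_mul_of_nonneg_left (pow_le_one₀ (abs_nonneg x) hx1) (a_nonneg l)
        _ = a l := mul_one _
  have h2 : Tendsto (fun x : ℝ => ∑' l : ℕ, a l * x ^ (2 * l + 1)) (𝓝[<] (1:ℝ))
      (𝓝 (π / 2)) := by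
    have harc : Tendsto Real.arcsin (𝓝[<] (1:ℝ)) (𝓝 (Real.arcsin 1)) :=
      (Real.continuous_arcsin.tendsto 1).mono_left nhdsWithin_le_nhds
    rw [Real.arcsin_one] at harc
    refine Filter.Tendsto.congr' ?_ harc
    filter_upwards [hmem] with x hx
    exact (tsum_aa (abs_lt.mpr ⟨hx.1, hx.2⟩)).symm
  exact tendsto_nhds_unique h1 h2

lemma main_hasSum {x : ℝ} (hx : |x| ≤ 1) :
    HasSum (fun l : ℕ => a l * x ^ (2 * l + 1)) (Real.arcsin x) := by
  have hs1 : HasSum a (π / 2) := summable_a.hasSum_iff.mpr tsum_a_eq_pi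
  rcases lt_or_eq_of_le hx with h | h
  · exact (summable_term hx).hasSum_iff.mpr (tsum_aa h)
  · rcases (abs_eq (by norm_num : (0:ℝ) ≤ 1)).mp h with h1 | h1
    · subst h1
      rw [Real.arcsin_one]
      simpa using hs1
    · subst h1
      rw [Real.arcsin_neg_one]
      have heq : (fun l : ℕ => a l * (-1 : ℝ) ^ (2 * l + 1)) = fun l => -a l := by
        funext l
        rw [Odd.neg_one_pow ⟨l, by ring⟩]
        ring
      rw [heq]
      exact hs1.neg

end ArcsinTaylorAux5


open ArcsinTaylorAux ArcsinTaylorAux2 ArcsinTaylorAux3 ArcsinTaylorAux4 ArcsinTaylorAux5 in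
/-- **Taylor series of arcsin on `[-1, 1]`.**
For `|x| ≤ 1`, `arcsin x = ∑ₗ binom(2ℓ,ℓ) 2^{-2ℓ}/(2ℓ+1) · x^{2ℓ+1}`; in particular
the sum of the coefficients equals `π/2`. -/
theorem arcsin_taylor_series :
    (∀ x : ℝ, |x| ≤ 1 →
      HasSum
        (fun l : ℕ =>
          (Nat.choose (2 * l) l : ℝ) * ((2 : ℝ) ^ (2 * l))⁻¹ / (2 * l + 1)
            * x ^ (2 * l + 1))
        (Real.arcsin x)) ∧
    (∑' l : ℕ, (Nat.choose (2 * l) l : ℝ) * ((2 : ℝ) ^ (2 * l))⁻¹ / (2 * l + 1))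
      = π / 2 := by
  constructor
  · intro x hx
    exact main_hasSum hx
  · exact tsum_a_eq_pi
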